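/- Fix η > 0 and set α = ηβ, and let x_{ηβ,β}^δ be the minimizer of Φ_{ηβ,β}. The function β ↦ ‖Kx_{ηβ,β}^δ − y^δ‖ is monotonically nondecreasing and continuous on (0, ∞). If lim_{β→0} ‖Kx_{ηβ,β}^δ − y^δ‖ < δ and ‖y^δ‖ > δ, then there exists at least one β* > 0 with ‖Kx_{ηβ*,β*}^δ − y^δ‖ = δ; moreover, if β* satisfies β*η < sup_{h ≠ 0} ⟨K*y^δ, h⟩/‖h‖_{ℓ¹}, then such β* is unique. -/

import Mathlib

noncomputable section

open Filter Topology

/-- `ℓ²(ℕ, ℝ)`. -/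
abbrev ltwo : Type := lp (fun _ : ℕ => ℝ) 2

/-- `x ∈ ℓ¹`. -/
def inL1 (x : ltwo) : Prop := Memℓp (fun i => x i) 1

/-- The `ℓ¹`-norm `‖x‖_{ℓ¹} = ∑ |xᵢ|` (junk value if `x ∉ ℓ¹`). -/
noncomputable def l1norm (x : ltwo) : ℝ := ∑' i, |x i|

/-- The elastic-net functional `Φ_{α,β}(x) = ½‖Kx − y‖² + α‖x‖₁ + (β/2)‖x‖₂²`,
real-valued on its effective domain `ℓ¹ ∩ ℓ²` (the convention `Φ = +∞` off `ℓ¹` is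
implemented by restricting all statements to `inL1`). -/
noncomputable def Phi {H : Type*} [NormedAddCommGroup H] [InnerProductSpace ℝ H]
    (K : ltwo →L[ℝ] H) (y : H) (α β : ℝ) (x : ltwo) : ℝ :=
  (1 / 2) * ‖K x - y‖ ^ 2 + α * l1norm x + (β / 2) * ‖x‖ ^ 2

/-- `x` is a minimizer of `Φ_{α,β}` over `ℓ²` (with the `+∞` convention off `ℓ¹`). -/
def IsMinimizer {H : Type*} [NormedAddCommGroup H] [InnerProductSpace ℝ H]
    (K : ltwo →L[ℝ] H) (y : H) (α β : ℝ) (x : ltwo) : Prop :=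
  inL1 x ∧ ∀ z : ltwo, inL1 z → Phi K y α β x ≤ Phi K y α β z


lemma inL1_summable {x : ltwo} (hx : inL1 x) : Summable (fun i => |x i|) := by
  have := hx.summable (p := 1) (by norm_num)
  simpa using this

lemma l1norm_nonneg (x : ltwo) : 0 ≤ l1norm x :=
  tsum_nonneg (fun i => abs_nonneg _)

lemma inL1_zero : inL1 (0 : ltwo) := by
  have : Memℓp (0 : ∀ _ : ℕ, ℝ) 1 := zero_memℓp
  simpa [inL1, Pi.zero_def] using this

lemma l1norm_zero : l1norm (0 : ltwo) = 0 := by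
  simp [l1norm]

lemma inL1_smul {x : ltwo} (hx : inL1 x) (c : ℝ) : inL1 (c • x) := by
  have := hx.const_smul c
  unfold inL1
  convert this using 1
  ext i
  simp

lemma inL1_add {x z : ltwo} (hx : inL1 x) (hz : inL1 z) : inL1 (x + z) := by
  have := hx.add hz
  unfold inL1
  convert this using 1
  ext i
  simp

lemma l1norm_smul (c : ℝ) (x : ltwo) : l1norm (c • x) = |c| * l1norm x := by
  unfold l1norm
  rw [← tsum_mul_left]
  congr 1
  ext i
  rw [lp.coeFn_smul]
  simp [abs_mul]

lemma l1norm_pos {h : ltwo} (hh : inL1 h) (hne : h ≠ 0) : 0 < l1norm h := by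
  have : ∃ i, h i ≠ 0 := by
    by_contra hc
    push_neg at hc
    apply hne
    ext i
    simpa using hc i
  obtain ⟨i, hi⟩ := this
  have h1 : |h i| ≤ l1norm h := Summable.le_tsum (inL1_summable hh) i (fun j _ => abs_nonneg _)
  have : 0 < |h i| := abs_pos.2 hi
  linarith

lemma l1norm_midpoint {x z : ltwo} (hx : inL1 x) (hz : inL1 z) :
    l1norm ((2⁻¹ : ℝ) • (x + z)) ≤ 2⁻¹ * l1norm x + 2⁻¹ * l1norm z := by
  rw [l1norm_smul]
  have habs : |(2:ℝ)⁻¹| = 2⁻¹ := by norm_num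
  rw [habs]
  have hsum : l1norm (x + z) ≤ l1norm x + l1norm z := by
    unfold l1norm
    have h1 : ∀ i, |(x + z) i| ≤ |x i| + |z i| := by
      intro i
      rw [lp.coeFn_add]
      exact abs_add_le _ _
    calc ∑' i, |(x + z) i| ≤ ∑' i, (|x i| + |z i|) :=
          Summable.tsum_le_tsum h1 (by
            apply Summable.of_nonneg_of_le (fun i => abs_nonneg _) h1
            exact (inL1_summable hx).add (inL1_summable hz))
            ((inL1_summable hx).add (inL1_summable hz))
      _ = (∑' i, |x i|) + ∑' i, |z i| := Summable.tsum_add (inL1_summable hx) (inL1_summable hz)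
  linarith

section Main
variable {H : Type*} [NormedAddCommGroup H] [InnerProductSpace ℝ H]

/-- Strong convexity of `Φ`: quadratic growth away from a minimizer. -/
lemma strong_convexity (K : ltwo →L[ℝ] H) (y : H) {α β : ℝ} (hα : 0 ≤ α) {x : ltwo}
    (hx : IsMinimizer K y α β x) {z : ltwo} (hz : inL1 z) :
    (β / 4) * ‖z - x‖ ^ 2 ≤ Phi K y α β z - Phi K y α β x := by
  obtain ⟨hx1, hxmin⟩ := hx
  set m : ltwo := (2⁻¹ : ℝ) • (x + z) with hm
  have hm1 : inL1 m := inL1_smul (inL1_add hx1 hz) _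
  have hle : Phi K y α β x ≤ Phi K y α β m := hxmin m hm1
  have hKm : K m - y = (2⁻¹ : ℝ) • ((K x - y) + (K z - y)) := by
    rw [hm, map_smul, map_add]
    module
  have h1 : ‖K m - y‖ ^ 2 ≤ 2⁻¹ * ‖K x - y‖ ^ 2 + 2⁻¹ * ‖K z - y‖ ^ 2 := by
    rw [hKm, norm_smul, Real.norm_eq_abs, show |(2:ℝ)⁻¹| = 2⁻¹ by norm_num]
    have hp := parallelogram_law_with_norm ℝ (K x - y) (K z - y)
    nlinarith [hp, sq_nonneg ‖(K x - y) - (K z - y)‖]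
  have h2 : ‖m‖ ^ 2 = 2⁻¹ * ‖x‖ ^ 2 + 2⁻¹ * ‖z‖ ^ 2 - 4⁻¹ * ‖z - x‖ ^ 2 := by
    rw [hm, norm_smul, Real.norm_eq_abs, show |(2:ℝ)⁻¹| = 2⁻¹ by norm_num]
    have hp := parallelogram_law_with_norm ℝ x z
    have hzx : ‖x - z‖ = ‖z - x‖ := norm_sub_rev x z
    rw [← hzx]
    nlinarith [hp]
  have h3 : l1norm m ≤ 2⁻¹ * l1norm x + 2⁻¹ * l1norm z := l1norm_midpoint hx1 hz
  have hPm : Phi K y α β m ≤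
      2⁻¹ * Phi K y α β x + 2⁻¹ * Phi K y α β z - (β / 8) * ‖z - x‖ ^ 2 := by
    unfold Phi
    rw [h2]
    have hh3 := mul_le_mul_of_nonneg_left h3 hα
    have hh1 := mul_le_mul_of_nonneg_left h1 (by norm_num : (0:ℝ) ≤ 1/2)
    linarith
  linarith


lemma Phi_expand (K : ltwo →L[ℝ] H) (y : H) (α β : ℝ) (x : ltwo) :
    Phi K y α β x = ‖K x‖ ^ 2 / 2 - (inner ℝ (K x) y : ℝ) + ‖y‖ ^ 2 / 2
      + α * l1norm x + (β / 2) * ‖x‖ ^ 2 := by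
  unfold Phi
  rw [norm_sub_sq_real]
  ring

lemma Phi_smul (K : ltwo →L[ℝ] H) (y : H) (α β : ℝ) {s : ℝ} (hs : 0 ≤ s) (x : ltwo) :
    Phi K y α β (s • x) = s ^ 2 * ‖K x‖ ^ 2 / 2 - s * (inner ℝ (K x) y : ℝ) + ‖y‖ ^ 2 / 2
      + s * (α * l1norm x) + s ^ 2 * ((β / 2) * ‖x‖ ^ 2) := by
  rw [Phi_expand, map_smul, real_inner_smul_left, l1norm_smul, norm_smul, norm_smul,
    Real.norm_eq_abs, abs_of_nonneg hs]
  ring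

lemma aux_nonneg (A D : ℝ) (hA : 0 ≤ A) (h : ∀ t : ℝ, 0 < t → t < 1 → -(t * A / 2) ≤ D) :
    0 ≤ D := by
  by_contra hD
  push_neg at hD
  set t := min 2⁻¹ (-D / (A + 1)) with ht
  have ht0 : 0 < t := lt_min (by norm_num) (div_pos (neg_pos.2 hD) (by linarith))
  have ht1 : t < 1 := lt_of_le_of_lt (min_le_left _ _) (by norm_num)
  have h2 := h t ht0 ht1
  have h3 : t ≤ -D / (A + 1) := min_le_right _ _
  have h4 : t * A ≤ (-D / (A + 1)) * A := mul_le_mul_of_nonneg_right h3 hA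
  have h5 : (-D / (A + 1)) * A < -D := by
    rw [div_mul_eq_mul_div, div_lt_iff₀ (by linarith : (0:ℝ) < A + 1)]
    nlinarith
  linarith

/-- First-order stationarity of the minimizer along the ray through itself. -/
lemma stationarity (K : ltwo →L[ℝ] H) (y : H) {α β : ℝ} (hβ : 0 < β) {x : ltwo}
    (hx : IsMinimizer K y α β x) :
    ‖K x‖ ^ 2 + β * ‖x‖ ^ 2 + α * l1norm x - (inner ℝ (K x) y : ℝ) = 0 := by
  obtain ⟨hx1, hxmin⟩ := hx
  set A : ℝ := ‖K x‖ ^ 2 + β * ‖x‖ ^ 2 with hA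
  set D : ℝ := A + α * l1norm x - (inner ℝ (K x) y : ℝ) with hD
  have hAnn : 0 ≤ A := by positivity
  have key : ∀ s : ℝ, 0 ≤ s → Phi K y α β x ≤ Phi K y α β (s • x) := fun s _ =>
    hxmin (s • x) (inL1_smul hx1 s)
  have hx_eq : Phi K y α β x = Phi K y α β ((1 : ℝ) • x) := by rw [one_smul]
  have hq : ∀ t : ℝ, 0 < t → t < 1 →
      -(t * A / 2) ≤ D ∧ -(t * A / 2) ≤ -D := by
    intro t ht0 ht1
    have e1 := key (1 + t) (by linarith)
    have e2 := key (1 - t) (by linarith)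
    rw [hx_eq, Phi_smul K y α β (by linarith : (0:ℝ) ≤ 1),
      Phi_smul K y α β (by linarith : (0:ℝ) ≤ 1 + t)] at e1
    rw [hx_eq, Phi_smul K y α β (by linarith : (0:ℝ) ≤ 1),
      Phi_smul K y α β (by linarith : (0:ℝ) ≤ 1 - t)] at e2
    constructor
    · nlinarith [e1, ht0, sq_nonneg t]
    · nlinarith [e2, ht0, sq_nonneg t]
  have h1 : 0 ≤ D := aux_nonneg A D hAnn (fun t ht0 ht1 => (hq t ht0 ht1).1)
  have h2 : 0 ≤ -D := aux_nonneg A (-D) hAnn (fun t ht0 ht1 => (hq t ht0 ht1).2)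
  rw [hD, hA] at *
  linarith

lemma Phi_zero (K : ltwo →L[ℝ] H) (y : H) (α β : ℝ) :
    Phi K y α β 0 = ‖y‖ ^ 2 / 2 := by
  have : l1norm (0 : ltwo) = 0 := l1norm_zero
  simp [Phi, this]
  ring

/-- If `0` is a minimizer, the source condition fails. -/
lemma zero_min_bound (K : ltwo →L[ℝ] H) (y : H) {α β : ℝ} (hβ : 0 < β)
    (h0 : IsMinimizer K y α β 0) {h : ltwo} (hh : inL1 h) :
    (inner ℝ (K h) y : ℝ) ≤ α * l1norm h := by
  obtain ⟨_, hmin⟩ := h0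
  set A : ℝ := ‖K h‖ ^ 2 + β * ‖h‖ ^ 2 with hA
  set D : ℝ := α * l1norm h - (inner ℝ (K h) y : ℝ) with hD
  have hAnn : 0 ≤ A := by positivity
  have key : ∀ t : ℝ, 0 < t → t < 1 → -(t * A / 2) ≤ D := by
    intro t ht0 ht1
    have e1 := hmin (t • h) (inL1_smul hh t)
    rw [Phi_smul K y α β (le_of_lt ht0), Phi_zero] at e1
    nlinarith [e1, ht0]
  have := aux_nonneg A D hAnn key
  rw [hD] at this
  linarith

end Main

set_option maxHeartbeats 1000000 in
/-- The discrepancy principle: with `α = ηβ`, the discrepancy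
`β ↦ ‖Kx_{ηβ,β}^δ − y^δ‖` is nondecreasing and continuous on `(0,∞)`; if its limit as
`β → 0⁺` is `< δ` and `‖y^δ‖ > δ`, the equation `‖Kx_{ηβ,β}^δ − y^δ‖ = δ` has at least
one solution `β* > 0`, which is unique whenever
`β*η < sup_{h ≠ 0} ⟨K*y^δ, h⟩/‖h‖₁`. -/
theorem elasticNet_discrepancy_principle_existence_uniqueness
    {H : Type*} [NormedAddCommGroup H] [InnerProductSpace ℝ H] [CompleteSpace H]
    (K : ltwo →L[ℝ] H) (ydelta : H) (δ : ℝ) (hδ : 0 < δ)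
    (η : ℝ) (hη : 0 < η)
    (xmin : ℝ → ltwo)
    (hxmin : ∀ β : ℝ, 0 < β → IsMinimizer K ydelta (η * β) β (xmin β))
    (L : ℝ)
    (hL : Tendsto (fun β => ‖K (xmin β) - ydelta‖) (nhdsWithin 0 (Set.Ioi 0)) (nhds L))
    (hLδ : L < δ) (hy : δ < ‖ydelta‖) :
    MonotoneOn (fun β => ‖K (xmin β) - ydelta‖) (Set.Ioi 0) ∧
    ContinuousOn (fun β => ‖K (xmin β) - ydelta‖) (Set.Ioi 0) ∧
    (∃ βstar > (0 : ℝ), ‖K (xmin βstar) - ydelta‖ = δ) ∧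
    (∀ βstar : ℝ, 0 < βstar → ‖K (xmin βstar) - ydelta‖ = δ →
      (∃ h : ltwo, inL1 h ∧ h ≠ 0 ∧
        βstar * η <
          (inner ℝ (ContinuousLinearMap.adjoint K ydelta) h : ℝ) / l1norm h) →
      ∀ β' : ℝ, 0 < β' → ‖K (xmin β') - ydelta‖ = δ → β' = βstar) := by
  set g : ℝ → ℝ := fun β => ‖K (xmin β) - ydelta‖ with hgdef
  set Qf : ℝ → ℝ := fun β => η * l1norm (xmin β) + ‖xmin β‖ ^ 2 / 2 with hQdef
  have PS : ∀ (β : ℝ) (x : ltwo), Phi K ydelta (η * β) β x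
      = 1 / 2 * ‖K x - ydelta‖ ^ 2 + β * (η * l1norm x + ‖x‖ ^ 2 / 2) := by
    intro β x; unfold Phi; ring
  have Qnonneg : ∀ β : ℝ, 0 < β → 0 ≤ Qf β := by
    intro β hβ
    have h1 := l1norm_nonneg (xmin β)
    have h2 := sq_nonneg ‖xmin β‖
    have := hη.le
    simp only [hQdef]
    nlinarith
  have Qle : ∀ β₁ β₂ : ℝ, 0 < β₁ → β₁ ≤ β₂ → Qf β₂ ≤ Qf β₁ := by
    intro β₁ β₂ h1 h12
    rcases eq_or_lt_of_le h12 with rfl | hlt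
    · exact le_refl _
    have h2 : 0 < β₂ := h1.trans hlt
    have m1 := (hxmin β₁ h1).2 (xmin β₂) (hxmin β₂ h2).1
    have m2 := (hxmin β₂ h2).2 (xmin β₁) (hxmin β₁ h1).1
    rw [PS, PS] at m1 m2
    simp only [hQdef]
    nlinarith [m1, m2, sub_pos.2 hlt]
  have Fmono : ∀ β₁ β₂ : ℝ, 0 < β₁ → β₁ ≤ β₂ → g β₁ ≤ g β₂ := by
    intro β₁ β₂ h1 h12
    rcases eq_or_lt_of_le h12 with rfl | hlt
    · exact le_refl _
    have h2 : 0 < β₂ := h1.trans hlt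
    have m1 := (hxmin β₁ h1).2 (xmin β₂) (hxmin β₂ h2).1
    rw [PS, PS] at m1
    have hQ := Qle β₁ β₂ h1 h12
    simp only [hQdef] at hQ
    have hQ' := mul_le_mul_of_nonneg_left hQ h1.le
    have hF : ‖K (xmin β₁) - ydelta‖ ^ 2 ≤ ‖K (xmin β₂) - ydelta‖ ^ 2 := by
      nlinarith [m1, hQ']
    have n1 : (0:ℝ) ≤ ‖K (xmin β₁) - ydelta‖ := norm_nonneg _
    have n2 : (0:ℝ) ≤ ‖K (xmin β₂) - ydelta‖ := norm_nonneg _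
    simp only [hgdef]
    nlinarith
  have hmono : MonotoneOn g (Set.Ioi 0) := by
    intro a ha b hb hab
    exact Fmono a b ha hab
  -- continuity
  have hcont : ContinuousOn g (Set.Ioi 0) := by
    intro β₀ hβ₀
    rw [Set.mem_Ioi] at hβ₀
    rw [Metric.continuousWithinAt_iff]
    intro ε hε
    set M := Qf (β₀ / 2) with hMdef
    have hM0 : 0 ≤ M := Qnonneg _ (by linarith)
    set C : ℝ := ‖K‖ + 1 with hCdef
    have hC : 0 < C := by positivity
    have hKC : ‖K‖ ≤ C := by simp [hCdef]
    refine ⟨min (β₀ / 2) (ε ^ 2 * β₀ / (4 * (M + 1) * C ^ 2)),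
      lt_min (by linarith) (by positivity), ?_⟩
    intro β hβmem hdist
    rw [Set.mem_Ioi] at hβmem
    rw [Real.dist_eq] at hdist ⊢
    have hd1 : |β - β₀| < β₀ / 2 := lt_of_lt_of_le hdist (min_le_left _ _)
    have hd2 : |β - β₀| < ε ^ 2 * β₀ / (4 * (M + 1) * C ^ 2) :=
      lt_of_lt_of_le hdist (min_le_right _ _)
    have hββ : β₀ / 2 < β := by
      rcases abs_lt.1 hd1 with ⟨h1, _⟩
      linarith
    have hQβM : Qf β ≤ M := Qle _ _ (by linarith) hββ.le
    have hQβ₀M : Qf β₀ ≤ M := Qle _ _ (by linarith) (by linarith)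
    have hQβ0 : 0 ≤ Qf β := Qnonneg _ hβmem
    have hQβ₀0 : 0 ≤ Qf β₀ := Qnonneg _ hβ₀
    -- strong convexity at β₀
    have hsc := strong_convexity K ydelta (mul_nonneg hη.le hβ₀.le)
      (hxmin β₀ hβ₀) (hxmin β hβmem).1
    -- energy comparison
    have hmin := (hxmin β hβmem).2 (xmin β₀) (hxmin β₀ hβ₀).1
    rw [PS, PS] at hmin
    have hchain : Phi K ydelta (η * β₀) β₀ (xmin β) - Phi K ydelta (η * β₀) β₀ (xmin β₀)
        ≤ |β - β₀| * M := by
      rw [PS, PS]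
      have habs : (β - β₀) * (Qf β₀ - Qf β) ≤ |β - β₀| * M := by
        calc (β - β₀) * (Qf β₀ - Qf β) ≤ |(β - β₀) * (Qf β₀ - Qf β)| := le_abs_self _
          _ = |β - β₀| * |Qf β₀ - Qf β| := abs_mul _ _
          _ ≤ |β - β₀| * M := by
              apply mul_le_mul_of_nonneg_left _ (abs_nonneg _)
              rw [abs_le]
              constructor <;> linarith
      simp only [hQdef] at habs
      linarith [hmin, habs]
    have hsq : ‖xmin β - xmin β₀‖ ^ 2 < ε ^ 2 / C ^ 2 := by
      have h5 : (β₀ / 4) * ‖xmin β - xmin β₀‖ ^ 2 ≤ |β - β₀| * M := le_trans hsc hchain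
      have hX : 0 < ε ^ 2 * β₀ / (4 * (M + 1) * C ^ 2) := by positivity
      have h6a : |β - β₀| * M ≤ (ε ^ 2 * β₀ / (4 * (M + 1) * C ^ 2)) * M :=
        mul_le_mul_of_nonneg_right hd2.le hM0
      have h6 : |β - β₀| * M < (ε ^ 2 * β₀ / (4 * (M + 1) * C ^ 2)) * (M + 1) := by
        nlinarith [h6a, hX]
      have h7 : (ε ^ 2 * β₀ / (4 * (M + 1) * C ^ 2)) * (M + 1) = ε ^ 2 * β₀ / (4 * C ^ 2) := by
        field_simp
      rw [h7] at h6
      have h8 : (β₀ / 4) * ‖xmin β - xmin β₀‖ ^ 2 < ε ^ 2 * β₀ / (4 * C ^ 2) := lt_of_le_of_lt h5 h6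
      have h9 : ε ^ 2 * β₀ / (4 * C ^ 2) = (β₀ / 4) * (ε ^ 2 / C ^ 2) := by
        field_simp
      rw [h9] at h8
      exact (mul_lt_mul_iff_right₀ (by linarith : (0:ℝ) < β₀ / 4)).1 h8
    have hdg : |g β - g β₀| ≤ ‖K‖ * ‖xmin β - xmin β₀‖ := by
      have h9 : |‖K (xmin β) - ydelta‖ - ‖K (xmin β₀) - ydelta‖|
          ≤ ‖(K (xmin β) - ydelta) - (K (xmin β₀) - ydelta)‖ := abs_norm_sub_norm_le _ _
      have h10 : (K (xmin β) - ydelta) - (K (xmin β₀) - ydelta) = K (xmin β - xmin β₀) := by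
        rw [map_sub]; abel
      rw [h10] at h9
      exact le_trans h9 (K.le_opNorm _)
    have hdpos : (0:ℝ) ≤ ‖xmin β - xmin β₀‖ := norm_nonneg _
    have hfin : ‖xmin β - xmin β₀‖ < ε / C := by
      have : (ε / C) ^ 2 = ε ^ 2 / C ^ 2 := div_pow ε C 2
      nlinarith [hsq, hdpos, div_pos hε hC]
    calc |g β - g β₀| ≤ ‖K‖ * ‖xmin β - xmin β₀‖ := hdg
      _ ≤ C * ‖xmin β - xmin β₀‖ := mul_le_mul_of_nonneg_right hKC hdpos
      _ < C * (ε / C) := by exact mul_lt_mul_of_pos_left hfin hC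
      _ = ε := by field_simp
  refine ⟨hmono, hcont, ?_, ?_⟩
  · -- existence
    have hev : ∀ᶠ β in nhdsWithin 0 (Set.Ioi 0), g β < δ := hL.eventually_lt_const hLδ
    have hmem : ∀ᶠ β in nhdsWithin 0 (Set.Ioi 0), β ∈ Set.Ioi (0:ℝ) :=
      eventually_mem_nhdsWithin
    obtain ⟨a, hga, ha⟩ := (hev.and hmem).exists
    rw [Set.mem_Ioi] at ha
    set T : ℝ := (‖K‖ * ‖ydelta‖ / (‖ydelta‖ - δ)) ^ 2 + 1 with hTdef
    have hT : 0 < T := by positivity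
    set b : ℝ := max a T with hbdef
    have hb : 0 < b := lt_max_of_lt_right hT
    have hab : a ≤ b := le_max_left _ _
    have hbT : T ≤ b := le_max_right _ _
    -- at b the discrepancy exceeds δ
    have hxb : b * ‖xmin b‖ ^ 2 ≤ ‖ydelta‖ ^ 2 := by
      have hm := (hxmin b hb).2 0 inL1_zero
      rw [Phi_zero] at hm
      rw [PS] at hm
      have h1 := sq_nonneg ‖K (xmin b) - ydelta‖
      have h2 := l1norm_nonneg (xmin b)
      have h4 : 0 ≤ b * (η * l1norm (xmin b)) := mul_nonneg hb.le (mul_nonneg hη.le h2)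
      linarith [hm, h1, h4]
    have hgb : δ < g b := by
      have h1 : ‖ydelta‖ - ‖K (xmin b)‖ ≤ ‖K (xmin b) - ydelta‖ := by
        have := norm_sub_norm_le ydelta (K (xmin b))
        rw [norm_sub_rev]
        linarith [this]
      have h2 : ‖K (xmin b)‖ ≤ ‖K‖ * ‖xmin b‖ := K.le_opNorm _
      have h3 : ‖K‖ * ‖xmin b‖ < ‖ydelta‖ - δ := by
        have hK0 : (0:ℝ) ≤ ‖K‖ := norm_nonneg _
        have hx0 : (0:ℝ) ≤ ‖xmin b‖ := norm_nonneg _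
        have hyd : 0 < ‖ydelta‖ - δ := by linarith
        -- (‖K‖‖xb‖)² ≤ ‖K‖²‖y‖²/b < (‖y‖−δ)²
        have h4 : (‖K‖ * ‖xmin b‖) ^ 2 * b ≤ ‖K‖ ^ 2 * ‖ydelta‖ ^ 2 := by nlinarith [hxb]
        have h5 : ‖K‖ ^ 2 * ‖ydelta‖ ^ 2 < (‖ydelta‖ - δ) ^ 2 * b := by
          have h6 : ‖K‖ ^ 2 * ‖ydelta‖ ^ 2 < T * (‖ydelta‖ - δ) ^ 2 := by
            rw [hTdef]
            have h7 : ((‖K‖ * ‖ydelta‖ / (‖ydelta‖ - δ)) ^ 2) * (‖ydelta‖ - δ) ^ 2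
                = ‖K‖ ^ 2 * ‖ydelta‖ ^ 2 := by
              rw [div_pow, div_mul_cancel₀ _ (pow_ne_zero 2 hyd.ne'), mul_pow]
            nlinarith [h7, sq_nonneg (‖ydelta‖ - δ), hyd]
          nlinarith [h6, hbT, sq_nonneg (‖ydelta‖ - δ), hyd]
        have h8 : (‖K‖ * ‖xmin b‖) ^ 2 * b < (‖ydelta‖ - δ) ^ 2 * b := by linarith
        have h9 : (‖K‖ * ‖xmin b‖) ^ 2 < (‖ydelta‖ - δ) ^ 2 :=
          lt_of_mul_lt_mul_right h8 hb.le
        nlinarith [h9, mul_nonneg hK0 hx0, hyd]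
      simp only [hgdef]
      linarith
    have hsub : Set.Icc a b ⊆ Set.Ioi (0:ℝ) := fun t ht => lt_of_lt_of_le ha ht.1
    have hIVT := intermediate_value_Icc hab (hcont.mono hsub)
    have hδmem : δ ∈ Set.Icc (g a) (g b) := ⟨hga.le, hgb.le⟩
    obtain ⟨βs, hβsmem, hβseq⟩ := hIVT hδmem
    exact ⟨βs, lt_of_lt_of_le ha hβsmem.1, hβseq⟩
  · -- uniqueness
    rintro βs hβs hgs ⟨h, hh1, hhne, hhlt⟩ β' hβ' hg'
    by_contra hne'
    have core : ∀ β₁ β₂ : ℝ, 0 < β₁ → β₁ < β₂ →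
        ‖K (xmin β₁) - ydelta‖ = δ → ‖K (xmin β₂) - ydelta‖ = δ →
        IsMinimizer K ydelta (η * β₁) β₁ 0 ∧ IsMinimizer K ydelta (η * β₂) β₂ 0 := by
      intro β₁ β₂ h1 h12 e1 e2
      have h2 : 0 < β₂ := h1.trans h12
      obtain ⟨hx1, hm1⟩ := hxmin β₁ h1
      obtain ⟨hx2, hm2⟩ := hxmin β₂ h2
      have q1 := hm1 (xmin β₂) hx2
      have q2 := hm2 (xmin β₁) hx1
      rw [PS, PS] at q1 q2
      rw [e1, e2] at q1 q2
      have hQeq : η * l1norm (xmin β₁) + ‖xmin β₁‖ ^ 2 / 2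
          = η * l1norm (xmin β₂) + ‖xmin β₂‖ ^ 2 / 2 := by nlinarith [q1, q2]
      have hmin12 : IsMinimizer K ydelta (η * β₂) β₂ (xmin β₁) := by
        refine ⟨hx1, fun z hz => ?_⟩
        have h3 := hm2 z hz
        rw [PS, PS] at h3
        rw [PS, PS]
        rw [e2] at h3
        rw [e1]
        have hQ2 : β₂ * (η * l1norm (xmin β₁) + ‖xmin β₁‖ ^ 2 / 2)
            = β₂ * (η * l1norm (xmin β₂) + ‖xmin β₂‖ ^ 2 / 2) := by rw [hQeq]
        linarith [h3, hQ2]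
      have s1 := stationarity K ydelta h1 (hxmin β₁ h1)
      have s2 := stationarity K ydelta h2 hmin12
      have hzero : ‖xmin β₁‖ ^ 2 + η * l1norm (xmin β₁) = 0 := by
        have hcomb : (β₂ - β₁) * (‖xmin β₁‖ ^ 2 + η * l1norm (xmin β₁)) = 0 := by
          linear_combination s2 - s1
        have : β₂ - β₁ ≠ 0 := by linarith
        exact (mul_eq_zero.1 hcomb).resolve_left this
      have hx0 : xmin β₁ = 0 := by
        have hl := l1norm_nonneg (xmin β₁)
        have hn : ‖xmin β₁‖ ^ 2 = 0 := by nlinarith [sq_nonneg ‖xmin β₁‖]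
        have : ‖xmin β₁‖ = 0 := by
          have := sq_nonneg ‖xmin β₁‖
          nlinarith [norm_nonneg (xmin β₁)]
        exact norm_eq_zero.1 this
      constructor
      · rw [← hx0]; exact hxmin β₁ h1
      · rw [← hx0]; exact hmin12
    have hzmin : IsMinimizer K ydelta (η * βs) βs 0 := by
      rcases lt_or_gt_of_ne hne' with hlt2 | hlt2
      · exact (core β' βs hβ' hlt2 hg' hgs).2
      · exact (core βs β' hβs hlt2 hgs hg').1
    have hb := zero_min_bound K ydelta hβs hzmin hh1
    have hℓ : 0 < l1norm h := l1norm_pos hh1 hhne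
    rw [ContinuousLinearMap.adjoint_inner_left] at hhlt
    have hinner : (inner ℝ ydelta (K h) : ℝ) = (inner ℝ (K h) ydelta : ℝ) := real_inner_comm _ _
    rw [hinner] at hhlt
    rw [lt_div_iff₀ hℓ] at hhlt
    nlinarith [hb, hhlt, hℓ]
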